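/- Let n ≥ 2 be even and let ρ = |W_n⟩⟨W_n| be the W-state projector. Then for every ε with 0 ≤ ε < 4/n², the cumulative distribution function vanishes: F_ρ(ε) = 0. Equivalently, every Pauli string a with ⟨P_a⟩_ρ² ≤ ε < 4/n² satisfies ⟨P_a⟩_ρ = 0. -/

import Mathlib

open Matrix Kronecker
open scoped ComplexOrder

noncomputable def pauli1 : Fin 4 → Matrix (Fin 2) (Fin 2) ℂ
  | 0 => !![1, 0; 0, 1]
  | 1 => !![0, 1; 1, 0]
  | 2 => !![0, -Complex.I; Complex.I, 0]
  | 3 => !![1, 0; 0, -1]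

noncomputable def PauliOp {n : ℕ} (a : Fin n → Fin 4) :
    Matrix (Fin n → Fin 2) (Fin n → Fin 2) ℂ :=
  Matrix.of fun z z' => ∏ i, pauli1 (a i) (z i) (z' i)

/-- The trace norm of a matrix: the trace of the positive semidefinite square root of `Aᴴ * A`. -/
noncomputable def traceNorm {m : Type*} [Fintype m] [DecidableEq m]
    (A : Matrix m m ℂ) : ℝ :=
  (((Matrix.posSemidef_conjTranspose_mul_self A).1.eigenvectorUnitary : Matrix m m ℂ) *
    Matrix.diagonal ((fun x : ℝ => (x : ℂ)) ∘ (Real.sqrt ·) ∘ (Matrix.posSemidef_conjTranspose_mul_self A).1.eigenvalues) *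
    (star (Matrix.posSemidef_conjTranspose_mul_self A).1.eigenvectorUnitary : Matrix m m ℂ)).trace.re

/-- A quantum state: positive semidefinite with unit trace. -/
structure IsState {m : Type*} [Fintype m] (ρ : Matrix m m ℂ) : Prop where
  posSemidef : ρ.PosSemidef
  trace_one : ρ.trace = 1

/-- Pauli expectation value `⟨P_a⟩_ρ`. -/
noncomputable def pExp {n : ℕ} (ρ : Matrix (Fin n → Fin 2) (Fin n → Fin 2) ℂ)
    (a : Fin n → Fin 4) : ℝ := ((PauliOp a * ρ).trace).re

/-- The purity `tr ρ²`. -/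
noncomputable def purity {m : Type*} [Fintype m] (ρ : Matrix m m ℂ) : ℝ :=
  ((ρ * ρ).trace).re

/-- The Pauli distribution `p_ρ`. -/
noncomputable def pDist {n : ℕ} (ρ : Matrix (Fin n → Fin 2) (Fin n → Fin 2) ℂ)
    (a : Fin n → Fin 4) : ℝ := (pExp ρ a) ^ 2 / (2 ^ n * purity ρ)

/-- The cumulative distribution function `F_ρ`. -/
noncomputable def cdf {n : ℕ} (ρ : Matrix (Fin n → Fin 2) (Fin n → Fin 2) ℂ)
    (ε : ℝ) : ℝ := ∑ a : Fin n → Fin 4, if (pExp ρ a) ^ 2 ≤ ε then pDist ρ a else 0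

/-- The maximally entangled state `|Φ₀⟩`. -/
noncomputable def Phi0 (n : ℕ) : (Fin n → Fin 2) × (Fin n → Fin 2) → ℂ :=
  fun p => if p.1 = p.2 then (↑(Real.sqrt (2 ^ n)))⁻¹ else 0

/-- The Bell state `|Φ_a⟩ = (1 ⊗ P_a)|Φ₀⟩`. -/
noncomputable def BellVec {n : ℕ} (a : Fin n → Fin 4) :
    (Fin n → Fin 2) × (Fin n → Fin 2) → ℂ :=
  ((1 : Matrix (Fin n → Fin 2) (Fin n → Fin 2) ℂ) ⊗ₖ PauliOp a).mulVec (Phi0 n)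

/-- The Bell distribution `q_ρ(a) = ⟨Φ_a| ρ ⊗ ρ |Φ_a⟩`. -/
noncomputable def qDist {n : ℕ} (ρ : Matrix (Fin n → Fin 2) (Fin n → Fin 2) ℂ)
    (a : Fin n → Fin 4) : ℝ :=
  (star (BellVec a) ⬝ᵥ ((ρ ⊗ₖ ρ).mulVec (BellVec a))).re

/-- The W state. -/
noncomputable def Wstate (n : ℕ) : (Fin n → Fin 2) → ℂ :=
  fun z => if (∑ i, (z i : ℕ)) = 1 then (↑(Real.sqrt n))⁻¹ else 0

/-- The W state projector `|W_n⟩⟨W_n|`. -/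
noncomputable def Wproj (n : ℕ) : Matrix (Fin n → Fin 2) (Fin n → Fin 2) ℂ :=
  Matrix.vecMulVec (Wstate n) (star (Wstate n))

open Finset

-- pauli entry lemmas
lemma pauli_00_one {t : Fin 4} (h : t = 0 ∨ t = 3) : pauli1 t 0 0 = 1 := by
  rcases h with h | h <;> subst h <;> simp [pauli1]

lemma pauli_00_zero {t : Fin 4} (h : t = 1 ∨ t = 2) : pauli1 t 0 0 = 0 := by
  rcases h with h | h <;> subst h <;> simp [pauli1]

lemma pauli_11_zero {t : Fin 4} (h : t = 1 ∨ t = 2) : pauli1 t 1 1 = 0 := by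
  rcases h with h | h <;> subst h <;> simp [pauli1]

lemma pauli_10_zero {t : Fin 4} (h : t = 0 ∨ t = 3) : pauli1 t 1 0 = 0 := by
  rcases h with h | h <;> subst h <;> simp [pauli1]

lemma pauli_01_zero {t : Fin 4} (h : t = 0 ∨ t = 3) : pauli1 t 0 1 = 0 := by
  rcases h with h | h <;> subst h <;> simp [pauli1]

lemma fin4_alt {t : Fin 4} (h : ¬(t = 0 ∨ t = 3)) : t = 1 ∨ t = 2 := by
  revert h; revert t; decide

lemma fin4_alt' {t : Fin 4} (h : ¬(t = 1 ∨ t = 2)) : t = 0 ∨ t = 3 := by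
  revert h; revert t; decide

-- the basis string with a single 1 at j
def eb (n : ℕ) (j : Fin n) : Fin n → Fin 2 := fun i => if i = j then 1 else 0

lemma eb_self {n : ℕ} (j : Fin n) : eb n j j = 1 := by simp [eb]
lemma eb_ne {n : ℕ} {i j : Fin n} (h : i ≠ j) : eb n j i = 0 := by simp [eb, h]

lemma wt_eb {n : ℕ} (j : Fin n) : (∑ i, ((eb n j i : ℕ))) = 1 := by
  have : ∀ i, ((eb n j i : ℕ)) = if i = j then 1 else 0 := by
    intro i; by_cases h : i = j <;> simp [eb, h]
  simp [this]

lemma fin2_cast (x : Fin 2) : ((x : ℕ)) = if x = 1 then 1 else 0 := by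
  revert x; decide

lemma wt_one_exists {n : ℕ} {z : Fin n → Fin 2} (h : (∑ i, (z i : ℕ)) = 1) :
    ∃ j, z = eb n j := by
  classical
  have hcard : (univ.filter (fun i => z i = 1)).card = 1 := by
    have h2 : (∑ i, if z i = 1 then (1:ℕ) else 0) = ∑ i, ((z i : ℕ)) :=
      Finset.sum_congr rfl fun i _ => (fin2_cast (z i)).symm
    rw [Finset.card_filter, h2, h]
  obtain ⟨j, hj⟩ := Finset.card_eq_one.mp hcard
  refine ⟨j, ?_⟩
  funext i
  have hmem : ∀ i : Fin n, z i = 1 ↔ i = j := by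
    intro i
    constructor
    · intro hi
      have : i ∈ univ.filter (fun i => z i = 1) := by simp [hi]
      rw [hj] at this; simpa using this
    · intro hi
      have h3 : j ∈ Finset.filter (fun k => z k = 1) Finset.univ := by
        rw [hj]; exact Finset.mem_singleton_self j
      rw [hi]; exact (Finset.mem_filter.mp h3).2
  by_cases hij : i = j
  · subst hij; rw [(hmem i).mpr rfl, eb_self]
  · rw [eb_ne hij]
    have : z i ≠ 1 := fun hc => hij ((hmem i).mp hc)
    omega

lemma sum_wt1 {n : ℕ} (g : (Fin n → Fin 2) → ℂ)
    (hg : ∀ z, (∑ i, (z i : ℕ)) ≠ 1 → g z = 0) :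
    ∑ z, g z = ∑ j, g (eb n j) := by
  classical
  rw [← Finset.sum_filter_of_ne (p := fun z => (∑ i, ((z i : ℕ))) = 1)
    (fun z _ hz => by by_contra hc; exact hz (hg z hc))]
  have himg : (univ.filter (fun z => (∑ i, ((z i : ℕ))) = 1)) = univ.image (eb n) := by
    ext z
    constructor
    · intro hz
      rw [Finset.mem_filter] at hz
      obtain ⟨j, hj⟩ := wt_one_exists hz.2
      exact Finset.mem_image.mpr ⟨j, Finset.mem_univ j, hj.symm⟩
    · intro hz
      obtain ⟨j, -, rfl⟩ := Finset.mem_image.mp hz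
      exact Finset.mem_filter.mpr ⟨Finset.mem_univ _, wt_eb j⟩
  rw [himg, Finset.sum_image]
  intro j _ k _ hjk
  have := congrFun hjk j
  rw [eb_self] at this
  by_contra hne
  rw [eb_ne hne] at this
  exact one_ne_zero this

lemma Pdiag {n : ℕ} (a : Fin n → Fin 4) (j : Fin n) :
    PauliOp a (eb n j) (eb n j) =
      if (∀ i, i ≠ j → (a i = 0 ∨ a i = 3)) then pauli1 (a j) 1 1 else 0 := by
  classical
  show (∏ i, pauli1 (a i) (eb n j i) (eb n j i)) = _
  rw [← Finset.mul_prod_erase Finset.univ _ (Finset.mem_univ j), eb_self]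
  split_ifs with h
  · rw [Finset.prod_eq_one, mul_one]
    intro i hi
    have hij : i ≠ j := (Finset.mem_erase.mp hi).1
    rw [eb_ne hij, pauli_00_one (h i hij)]
  · push_neg at h
    obtain ⟨i, hij, hi⟩ := h
    rw [Finset.prod_eq_zero (Finset.mem_erase.mpr ⟨hij, Finset.mem_univ i⟩), mul_zero]
    rw [eb_ne hij, pauli_00_zero (fin4_alt (by tauto))]

lemma Poff {n : ℕ} (a : Fin n → Fin 4) {j k : Fin n} (hjk : j ≠ k) :
    PauliOp a (eb n j) (eb n k) =
      if (∀ i, i ≠ j → i ≠ k → (a i = 0 ∨ a i = 3)) then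
        pauli1 (a j) 1 0 * pauli1 (a k) 0 1 else 0 := by
  classical
  show (∏ i, pauli1 (a i) (eb n j i) (eb n k i)) = _
  rw [← Finset.mul_prod_erase Finset.univ _ (Finset.mem_univ j),
    ← Finset.mul_prod_erase _ _ (Finset.mem_erase.mpr ⟨hjk.symm, Finset.mem_univ k⟩)]
  rw [eb_self, eb_ne hjk.symm, eb_ne hjk, eb_self]
  split_ifs with h
  · rw [Finset.prod_eq_one, mul_one]
    intro i hi
    have hik : i ≠ k := (Finset.mem_erase.mp hi).1
    have hij : i ≠ j := (Finset.mem_erase.mp (Finset.mem_erase.mp hi).2).1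
    rw [eb_ne hij, eb_ne hik, pauli_00_one (h i hij hik)]
  · push_neg at h
    obtain ⟨i, hij, hik, hi⟩ := h
    rw [Finset.prod_eq_zero
      (Finset.mem_erase.mpr ⟨hik, Finset.mem_erase.mpr ⟨hij, Finset.mem_univ i⟩⟩),
      mul_zero, mul_zero]
    rw [eb_ne hij, eb_ne hik, pauli_00_zero (fin4_alt (by tauto))]

lemma fin4_not_both {t : Fin 4} (h : t = 1 ∨ t = 2) (h' : t = 0 ∨ t = 3) : False := by
  revert h h'; revert t; decide

lemma Wstate_eb {n : ℕ} (j : Fin n) : Wstate n (eb n j) = (↑(Real.sqrt n))⁻¹ := by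
  simp [Wstate, wt_eb]

lemma Wstate_zero {n : ℕ} {z : Fin n → Fin 2} (h : (∑ i, (z i : ℕ)) ≠ 1) :
    Wstate n z = 0 := by simp [Wstate, h]

lemma star_Wstate {n : ℕ} (z : Fin n → Fin 2) : star (Wstate n z) = Wstate n z := by
  unfold Wstate; split_ifs <;> simp [Complex.star_def, Complex.conj_ofReal]

lemma sqrt_inv_sq (n : ℕ) :
    ((↑(Real.sqrt n) : ℂ))⁻¹ * (↑(Real.sqrt n))⁻¹ = ((n : ℂ))⁻¹ := by
  have h : (Real.sqrt n) * (Real.sqrt n) = (n : ℝ) := Real.mul_self_sqrt (Nat.cast_nonneg n)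
  rw [← mul_inv, ← Complex.ofReal_mul, h]
  norm_num

lemma trace_formula {n : ℕ} (a : Fin n → Fin 4) :
    (PauliOp a * Wproj n).trace
      = (n : ℂ)⁻¹ * ∑ j, ∑ k, PauliOp a (eb n j) (eb n k) := by
  classical
  have h1 : (PauliOp a * Wproj n).trace
      = ∑ z, ∑ z', PauliOp a z z' * (Wstate n z' * Wstate n z) := by
    simp only [Matrix.trace, Matrix.diag, Matrix.mul_apply, Wproj, Matrix.vecMulVec_apply,
      Pi.star_apply, star_Wstate]
  rw [h1]
  rw [sum_wt1 _ (fun z hz => by simp [Wstate_zero hz])]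
  have h2 : ∀ j : Fin n,
      (∑ z', PauliOp a (eb n j) z' * (Wstate n z' * Wstate n (eb n j)))
        = ∑ k, PauliOp a (eb n j) (eb n k) * ((n : ℂ))⁻¹ := by
    intro j
    rw [sum_wt1 _ (fun z hz => by simp [Wstate_zero hz])]
    refine Finset.sum_congr rfl fun k _ => ?_
    rw [Wstate_eb, Wstate_eb, sqrt_inv_sq]
  simp only [h2]
  rw [Finset.mul_sum]
  refine Finset.sum_congr rfl fun j _ => ?_
  rw [Finset.mul_sum]
  exact Finset.sum_congr rfl fun k _ => (mul_comm _ _)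

lemma S_case0 {n : ℕ} (a : Fin n → Fin 4) (h : ∀ i, a i = 0 ∨ a i = 3) :
    (∑ j, ∑ k, PauliOp a (eb n j) (eb n k))
      = (n : ℂ) - 2 * (((Finset.univ.filter (fun i => a i = 3)).card : ℂ)) := by
  classical
  have hdiag : ∀ j, (∑ k, PauliOp a (eb n j) (eb n k)) = pauli1 (a j) 1 1 := by
    intro j
    rw [Finset.sum_eq_single j]
    · rw [Pdiag, if_pos (fun i _ => h i)]
    · intro k _ hkj
      rw [Poff a (Ne.symm hkj)]
      split_ifs
      · rw [pauli_10_zero (h j), zero_mul]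
      · rfl
    · intro h'; exact absurd (Finset.mem_univ j) h'
  simp only [hdiag]
  have hval : ∀ j, pauli1 (a j) 1 1
      = 1 - 2 * (if a j = 3 then (1 : ℂ) else 0) := by
    intro j
    rcases h j with h0 | h3
    · rw [h0]; norm_num [pauli1, show ¬(0:Fin 4) = 3 from by decide]
    · rw [h3]; norm_num [pauli1]
  simp only [hval]
  rw [Finset.sum_sub_distrib, Finset.sum_const, ← Finset.mul_sum, Finset.sum_boole]
  simp [Finset.card_univ]

lemma S_case2 {n : ℕ} (a : Fin n → Fin 4) {j₀ k₀ : Fin n} (hjk : j₀ ≠ k₀)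
    (h1 : a j₀ = 1 ∨ a j₀ = 2) (h2 : a k₀ = 1 ∨ a k₀ = 2)
    (h3 : ∀ i, i ≠ j₀ → i ≠ k₀ → a i = 0 ∨ a i = 3) :
    (∑ j, ∑ k, PauliOp a (eb n j) (eb n k)) = 2 ∨
      (∑ j, ∑ k, PauliOp a (eb n j) (eb n k)) = 0 := by
  classical
  rw [← Finset.sum_product']
  have hab : ((j₀, k₀) : Fin n × Fin n) ≠ (k₀, j₀) :=
    fun hc => hjk (congrArg Prod.fst hc)
  have hz : ∀ c ∈ (Finset.univ ×ˢ Finset.univ : Finset (Fin n × Fin n)),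
      c ≠ (j₀, k₀) ∧ c ≠ (k₀, j₀) → PauliOp a (eb n c.1) (eb n c.2) = 0 := by
    rintro ⟨j, k⟩ - ⟨hc1, hc2⟩
    by_cases hjk' : j = k
    · subst hjk'
      rw [Pdiag, if_neg]
      intro hall
      by_cases hjj : j₀ = j
      · have hkj : k₀ ≠ j := fun hc => hjk (hjj.trans hc.symm)
        exact fin4_not_both h2 (hall k₀ hkj)
      · exact fin4_not_both h1 (hall j₀ hjj)
    · rw [Poff a hjk', if_neg]
      intro hall
      have hj0 : j₀ = j ∨ j₀ = k := by
        by_contra hcon; push_neg at hcon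
        exact fin4_not_both h1 (hall j₀ hcon.1 hcon.2)
      have hk0 : k₀ = j ∨ k₀ = k := by
        by_contra hcon; push_neg at hcon
        exact fin4_not_both h2 (hall k₀ hcon.1 hcon.2)
      rcases hj0 with e | e <;> rcases hk0 with e' | e'
      · exact hjk (e.trans e'.symm)
      · exact hc1 (by rw [← e, ← e'])
      · exact hc2 (by rw [← e, ← e'])
      · exact hjk (e.trans e'.symm)
  rw [Finset.sum_eq_add ((j₀, k₀) : Fin n × Fin n) (k₀, j₀) hab hz
    (fun h => absurd (Finset.mem_product.mpr ⟨Finset.mem_univ _, Finset.mem_univ _⟩) h)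
    (fun h => absurd (Finset.mem_product.mpr ⟨Finset.mem_univ _, Finset.mem_univ _⟩) h)]
  simp only
  rw [Poff a hjk, Poff a hjk.symm,
    if_pos (fun i hij hik => h3 i hij hik),
    if_pos (fun i hik hij => h3 i hij hik)]
  rcases h1 with e1 | e1 <;> rcases h2 with e2 | e2 <;> rw [e1, e2]
  · left; norm_num [pauli1]
  · right; simp [pauli1]
  · right; simp [pauli1]
  · left; simp [pauli1]; norm_num

lemma S_case3 {n : ℕ} (a : Fin n → Fin 4)
    (hC0 : ¬ ∀ i, a i = 0 ∨ a i = 3)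
    (hno : ¬ ∃ j k : Fin n, j ≠ k ∧ (a j = 1 ∨ a j = 2) ∧ (a k = 1 ∨ a k = 2) ∧
      ∀ i, i ≠ j → i ≠ k → (a i = 0 ∨ a i = 3)) :
    (∑ j, ∑ k, PauliOp a (eb n j) (eb n k)) = 0 := by
  classical
  refine Finset.sum_eq_zero fun j _ => Finset.sum_eq_zero fun k _ => ?_
  by_cases hjk : j = k
  · subst hjk
    rw [Pdiag]
    split_ifs with hall
    · refine pauli_11_zero (fin4_alt fun hj => hC0 fun i => ?_)
      by_cases hij : i = j
      · rw [hij]; exact hj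
      · exact hall i hij
    · rfl
  · rw [Poff a hjk]
    split_ifs with hall
    · by_cases hj : a j = 0 ∨ a j = 3
      · rw [pauli_10_zero hj, zero_mul]
      · by_cases hk : a k = 0 ∨ a k = 3
        · rw [pauli_01_zero hk, mul_zero]
        · exact absurd ⟨j, k, hjk, fin4_alt hj, fin4_alt hk, hall⟩ hno
    · rfl

/-- For `ρ = |W_n⟩⟨W_n|` and `0 ≤ ε < 4/n²`, the CDF vanishes,
`F_ρ(ε) = 0`; equivalently every Pauli string `a` with `⟨P_a⟩_ρ² ≤ ε`
satisfies `⟨P_a⟩_ρ = 0`. -/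
theorem stmt_8 {n : ℕ} (hn : 2 ≤ n) (hne : Even n) :
    ∀ ε : ℝ, 0 ≤ ε → ε < 4 / (n : ℝ) ^ 2 →
      cdf (Wproj n) ε = 0 ∧
      ∀ a : Fin n → Fin 4, (pExp (Wproj n) a) ^ 2 ≤ ε → pExp (Wproj n) a = 0 := by
  intro ε hε0 hε
  have hn0 : (0:ℝ) < n := by
    have : 0 < n := by omega
    exact_mod_cast this
  have key : ∀ a : Fin n → Fin 4,
      (pExp (Wproj n) a) ^ 2 ≤ ε → pExp (Wproj n) a = 0 := by
    intro a ha
    have hpe : pExp (Wproj n) a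
        = ((n : ℂ)⁻¹ * ∑ j, ∑ k, PauliOp a (eb n j) (eb n k)).re := by
      unfold pExp; rw [trace_formula]
    by_cases hC0 : ∀ i, a i = 0 ∨ a i = 3
    · rw [S_case0 a hC0] at hpe
      set m := (Finset.univ.filter (fun i => a i = 3)).card with hm
      have hval : pExp (Wproj n) a = ((n : ℝ) - 2 * m) / n := by
        rw [hpe]
        have hc : ((n : ℂ)⁻¹ * ((n : ℂ) - 2 * (m : ℂ)))
            = ((((n : ℝ) - 2 * m) / n : ℝ) : ℂ) := by
          push_cast; ring
        rw [hc, Complex.ofReal_re]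
      rw [hval] at ha ⊢
      by_cases hz : (n : ℝ) - 2 * m = 0
      · rw [hz]; simp
      · exfalso
        obtain ⟨c, hc⟩ := hne
        have hcm : (c : ℤ) ≠ m := by
          intro hcm
          apply hz
          have : (n : ℝ) = 2 * m := by
            have : ((n : ℤ) : ℝ) = ((2 * m : ℤ) : ℝ) := by
              congr 1; rw [hc]; push_cast; omega
            push_cast at this; linarith
          linarith
        have h1 : (1 : ℤ) ≤ ((c : ℤ) - m) ^ 2 := by
          have h0 : (c : ℤ) - m ≠ 0 := sub_ne_zero.mpr hcm
          have := Int.one_le_abs h0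
          nlinarith [sq_abs ((c : ℤ) - m)]
        have h2 : (4 : ℝ) ≤ ((n : ℝ) - 2 * m) ^ 2 := by
          have hr : (n : ℝ) - 2 * m = 2 * ((c : ℝ) - m) := by
            have : (n : ℝ) = (c : ℝ) + c := by exact_mod_cast congrArg (Nat.cast : ℕ → ℝ) hc
            rw [this]; ring
          have h1' : (1 : ℝ) ≤ ((c : ℝ) - m) ^ 2 := by exact_mod_cast h1
          rw [hr]; nlinarith
        have h3 : 4 / (n : ℝ) ^ 2 ≤ (((n : ℝ) - 2 * m) / n) ^ 2 := by
          rw [div_pow]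
          gcongr
        linarith
    · by_cases hex : ∃ j k : Fin n, j ≠ k ∧ (a j = 1 ∨ a j = 2) ∧ (a k = 1 ∨ a k = 2) ∧
          ∀ i, i ≠ j → i ≠ k → (a i = 0 ∨ a i = 3)
      · obtain ⟨j₀, k₀, hjk, h1, h2, h3⟩ := hex
        rcases S_case2 a hjk h1 h2 h3 with hS | hS
        · exfalso
          rw [hS] at hpe
          have hval : pExp (Wproj n) a = 2 / n := by
            rw [hpe]
            have hc : ((n : ℂ)⁻¹ * 2) = (((2 / n : ℝ)) : ℂ) := by push_cast; ring
            rw [hc, Complex.ofReal_re]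
          rw [hval] at ha
          have h4 : (2 / (n : ℝ)) ^ 2 = 4 / n ^ 2 := by rw [div_pow]; norm_num
          rw [h4] at ha
          linarith
        · rw [hS] at hpe; simpa using hpe
      · have hS := S_case3 a hC0 hex
        rw [hS] at hpe; simpa using hpe
  refine ⟨?_, key⟩
  unfold cdf
  apply Finset.sum_eq_zero
  intro a _
  split_ifs with h
  · unfold pDist; rw [key a h]; simp
  · rfl
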